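/- arXiv:2203.00240 — 4 statements merged into one kernel-verified Lean document; each statement's English description precedes it below -/
import Mathlib

section
/- Let κ : (0,∞) → (0,∞) be positive and integrable on bounded intervals, and suppose that for some a with 0 ≤ a ≤ 1 the function P ↦ P^{1−a} κ(P) is nondecreasing. Then for every β ≥ 0 the function φ_{β,a}(P) = P^{−(a+β)} ∫₀^P u^β κ(u) du is nondecreasing on (0,∞). -/
open MeasureTheory intervalIntegral

theorem stmt3 (κ : ℝ → ℝ) (a : ℝ) (ha0 : 0 ≤ a) (ha1 : a ≤ 1)
    (hκpos : ∀ u, 0 < u → 0 < κ u)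
    (hκint : ∀ b : ℝ, 0 < b → IntegrableOn κ (Set.Ioc 0 b))
    (hκa : MonotoneOn (fun P : ℝ => P ^ (1 - a) * κ P) (Set.Ioi 0)) :
    ∀ β : ℝ, 0 ≤ β →
      MonotoneOn (fun P : ℝ => P ^ (-(a + β)) * ∫ u in (0:ℝ)..P, u ^ β * κ u)
        (Set.Ioi 0) := by
  intro β hβ
  set c : ℝ := a + β with hcdef
  -- integrability of u^β * κ u on (0, b]
  have hint : ∀ b : ℝ, 0 < b → IntegrableOn (fun u => u ^ β * κ u) (Set.Ioc 0 b) := by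
    intro b hb
    have hκb := hκint b hb
    have hmeas : AEStronglyMeasurable (fun u : ℝ => u ^ β * κ u)
        (volume.restrict (Set.Ioc 0 b)) := by
      have hm : Measurable (fun u : ℝ => u ^ β) := by fun_prop
      exact hm.aestronglyMeasurable.mul hκb.aestronglyMeasurable
    refine (hκb.abs.const_mul (b ^ β)).mono' hmeas ?_
    rw [ae_restrict_iff' measurableSet_Ioc]
    filter_upwards with u hu
    have hu0 : 0 < u := hu.1
    rw [norm_mul, Real.norm_rpow_of_nonneg hu0.le, Real.norm_eq_abs]
    have h1 : |u| ^ β ≤ b ^ β := by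
      rw [abs_of_pos hu0]
      exact Real.rpow_le_rpow hu0.le hu.2 hβ
    exact mul_le_mul_of_nonneg_right h1 (abs_nonneg _)
  have hii : ∀ b : ℝ, 0 < b → IntervalIntegrable (fun u => u ^ β * κ u) volume 0 b :=
    fun b hb => (intervalIntegrable_iff_integrableOn_Ioc_of_le hb.le).2 (hint b hb)
  intro P hP Q hQ hPQ
  simp only [Set.mem_Ioi] at hP hQ
  rcases eq_or_lt_of_le hPQ with rfl | hlt
  · exact le_refl _
  by_cases hc0 : c = 0
  · -- then a = 0 and β = 0
    have ha' : a = 0 := by simp only [hcdef] at hc0; linarith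
    have hb' : β = 0 := by simp only [hcdef] at hc0; linarith
    subst ha' hb'
    simp only [hc0, neg_zero, Real.rpow_zero, one_mul]
    have iiP := (intervalIntegrable_iff_integrableOn_Ioc_of_le hP.le).2 (hκint P hP)
    have iiPQ : IntervalIntegrable κ volume P Q :=
      (intervalIntegrable_iff_integrableOn_Ioc_of_le hlt.le).2
        ((hκint Q hQ).mono_set (Set.Ioc_subset_Ioc_left hP.le))
    have hadd := intervalIntegral.integral_add_adjacent_intervals iiP iiPQ
    have hpos : 0 ≤ ∫ u in P..Q, κ u :=
      intervalIntegral.integral_nonneg hlt.le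
        (fun u hu => (hκpos u (lt_of_lt_of_le hP hu.1)).le)
    linarith
  have hc : 0 < c := lt_of_le_of_ne (by positivity) (Ne.symm hc0)
  obtain ⟨M, hM⟩ : ∃ M : ℝ, M = P ^ (1 - a) * κ P := ⟨_, rfl⟩
  have hMpos : 0 < M := hM ▸ mul_pos (Real.rpow_pos_of_pos hP _) (hκpos P hP)
  obtain ⟨x, hx⟩ : ∃ x : ℝ, x = P ^ c := ⟨_, rfl⟩
  obtain ⟨y, hy⟩ : ∃ y : ℝ, y = Q ^ c := ⟨_, rfl⟩
  have hxpos : 0 < x := hx ▸ Real.rpow_pos_of_pos hP _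
  have hypos : 0 < y := hy ▸ Real.rpow_pos_of_pos hQ _
  have hxy : x ≤ y := by rw [hx, hy]; exact Real.rpow_le_rpow hP.le hPQ hc.le
  -- interval integrability of M * u^(c-1)
  have hiipow : ∀ s t : ℝ, IntervalIntegrable (fun u : ℝ => M * u ^ (c - 1)) volume s t :=
    fun s t => (intervalIntegral.intervalIntegrable_rpow' (by linarith)).const_mul M
  -- upper bound on ∫₀^P
  have h1 : (∫ u in (0:ℝ)..P, u ^ β * κ u) ≤ M * x / c := by
    have hle : (∫ u in (0:ℝ)..P, u ^ β * κ u) ≤ ∫ u in (0:ℝ)..P, M * u ^ (c - 1) := by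
      apply intervalIntegral.integral_mono_ae_restrict hP.le (hii P hP) (hiipow 0 P)
      have h0 : ∀ᵐ u : ℝ, u ≠ 0 := by
        rw [ae_iff]
        simpa using (measure_singleton (0 : ℝ))
      rw [Filter.EventuallyLE, ae_restrict_iff' measurableSet_Icc]
      filter_upwards [h0] with u hu0 hu
      have hu0' : 0 < u := lt_of_le_of_ne hu.1 (Ne.symm hu0)
      have hsplit : u ^ β = u ^ (c - 1) * u ^ (1 - a) := by
        rw [← Real.rpow_add hu0', hcdef]; ring_nf
      have hmono : u ^ (1 - a) * κ u ≤ M := by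
        rw [hM]
        exact hκa (Set.mem_Ioi.2 hu0') (Set.mem_Ioi.2 hP) hu.2
      have hpow : (0:ℝ) ≤ u ^ (c - 1) := (Real.rpow_pos_of_pos hu0' _).le
      calc u ^ β * κ u = u ^ (c - 1) * (u ^ (1 - a) * κ u) := by rw [hsplit]; ring
        _ ≤ u ^ (c - 1) * M := mul_le_mul_of_nonneg_left hmono hpow
        _ = M * u ^ (c - 1) := mul_comm _ _
    have heq : (∫ u in (0:ℝ)..P, M * u ^ (c - 1)) = M * x / c := by
      rw [intervalIntegral.integral_const_mul, integral_rpow (Or.inl (by linarith)),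
        sub_add_cancel, Real.zero_rpow hc0, sub_zero, hx, mul_div_assoc]
    linarith [heq ▸ hle]
  -- lower bound on ∫_P^Q
  have h2 : M * (y - x) / c ≤ ∫ u in P..Q, u ^ β * κ u := by
    have hle : (∫ u in P..Q, M * u ^ (c - 1)) ≤ ∫ u in P..Q, u ^ β * κ u := by
      apply intervalIntegral.integral_mono_on hlt.le (hiipow P Q)
      · exact (intervalIntegrable_iff_integrableOn_Ioc_of_le hlt.le).2
          ((hint Q hQ).mono_set (Set.Ioc_subset_Ioc_left hP.le))
      · intro u hu
        have hu0' : 0 < u := lt_of_lt_of_le hP hu.1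
        have hsplit : u ^ β = u ^ (c - 1) * u ^ (1 - a) := by
          rw [← Real.rpow_add hu0', hcdef]; ring_nf
        have hmono : M ≤ u ^ (1 - a) * κ u := by
          rw [hM]
          exact hκa (Set.mem_Ioi.2 hP) (Set.mem_Ioi.2 hu0') hu.1
        have hpow : (0:ℝ) ≤ u ^ (c - 1) := (Real.rpow_pos_of_pos hu0' _).le
        calc M * u ^ (c - 1) = u ^ (c - 1) * M := mul_comm _ _
          _ ≤ u ^ (c - 1) * (u ^ (1 - a) * κ u) := mul_le_mul_of_nonneg_left hmono hpow
          _ = u ^ β * κ u := by rw [hsplit]; ring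
    have heq : (∫ u in P..Q, M * u ^ (c - 1)) = M * (y - x) / c := by
      rw [intervalIntegral.integral_const_mul, integral_rpow (Or.inl (by linarith)),
        sub_add_cancel, hx, hy, mul_div_assoc]
    linarith [heq ▸ hle]
  -- splitting the integral
  have hiiPQ : IntervalIntegrable (fun u => u ^ β * κ u) volume P Q :=
    (intervalIntegrable_iff_integrableOn_Ioc_of_le hlt.le).2
      ((hint Q hQ).mono_set (Set.Ioc_subset_Ioc_left hP.le))
  have hadd := intervalIntegral.integral_add_adjacent_intervals (hii P hP) hiiPQ
  -- final algebra
  simp only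
  rw [Real.rpow_neg hP.le, Real.rpow_neg hQ.le, ← hx, ← hy, ← hadd,
    inv_mul_eq_div, inv_mul_eq_div, div_le_div_iff₀ hxpos hypos]
  have t1 := mul_le_mul_of_nonneg_left h1 (sub_nonneg.2 hxy)
  have t2 := mul_le_mul_of_nonneg_left h2 hxpos.le
  have tring : (y - x) * (M * x / c) = x * (M * (y - x) / c) := by ring
  nlinarith [t1, t2, tring]
end

section
/- Let X, Y be Banach spaces, G continuously Fréchet differentiable on B(x*, δ) with G(x*) = 0 and G'(x*) invertible. Suppose κ₀ is a positive integrable nondecreasing function with ‖[G'(x*)]⁻¹(G'(x* + τ(x − x*)) − G'(x*))‖ ≤ ∫₀^{2τ‖x−x*‖} κ₀(u) du for all x ∈ B(x*, δ) and 0 ≤ τ ≤ 1, and that (1/(2δ)) ∫₀^{2δ} κ₀(u)(2δ − u) du < 1. Then x* is the unique solution of G(x) = 0 in B(x*, δ). -/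
open MeasureTheory intervalIntegral

open Set in
lemma fubini_aux (b : ℝ) (hb : 0 < b) (κ : ℝ → ℝ) (hint : IntegrableOn κ (Set.Ioc 0 b)) :
    ∫ s in (0:ℝ)..b, (∫ u in (0:ℝ)..s, κ u) = ∫ u in (0:ℝ)..b, κ u * (b - u) := by
  set μ := volume.restrict (Set.Ioc (0:ℝ) b) with hμ
  haveI : IsFiniteMeasure μ := ⟨by
    rw [hμ, Measure.restrict_apply_univ]; exact measure_Ioc_lt_top⟩
  have hmeas : MeasurableSet {p : ℝ × ℝ | p.2 ≤ p.1} :=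
    measurableSet_le measurable_snd measurable_fst
  have hκint : Integrable κ μ := hint
  have h2 : Integrable (fun p : ℝ × ℝ => κ p.2) (μ.prod μ) := by
    rw [integrable_prod_iff (hκint.aestronglyMeasurable.comp_snd)]
    refine ⟨Filter.Eventually.of_forall fun s => hκint, ?_⟩
    convert integrable_const (μ := μ) (∫ y, ‖κ y‖ ∂μ)
  have hintg : Integrable ({p : ℝ × ℝ | p.2 ≤ p.1}.indicator fun p => κ p.2) (μ.prod μ) :=
    h2.indicator hmeas
  have swap := MeasureTheory.integral_integral_swap
    (f := fun s u => ({p : ℝ × ℝ | p.2 ≤ p.1}.indicator fun p => κ p.2) (s, u)) hintg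
  have hL : ∫ s, (∫ u, ({p : ℝ × ℝ | p.2 ≤ p.1}.indicator fun p => κ p.2) (s, u) ∂μ) ∂μ
      = ∫ s in (0:ℝ)..b, (∫ u in (0:ℝ)..s, κ u) := by
    rw [intervalIntegral.integral_of_le hb.le, hμ]
    refine setIntegral_congr_fun measurableSet_Ioc fun s hs => ?_
    have h1 : (fun u => ({p : ℝ × ℝ | p.2 ≤ p.1}.indicator fun p => κ p.2) (s, u))
        = (Set.Iic s).indicator κ := by
      ext u; simp [Set.indicator_apply]
    rw [h1, MeasureTheory.integral_indicator measurableSet_Iic,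
      Measure.restrict_restrict measurableSet_Iic,
      intervalIntegral.integral_of_le hs.1.le]
    have hset : Set.Iic s ∩ Set.Ioc 0 b = Set.Ioc 0 s := by
      ext v
      simp only [Set.mem_inter_iff, Set.mem_Iic, Set.mem_Ioc]
      constructor
      · rintro ⟨h1, h2, _⟩; exact ⟨h2, h1⟩
      · rintro ⟨h1, h2⟩; exact ⟨h2, h1, h2.trans hs.2⟩
    rw [hset]
  have hR : ∫ u, (∫ s, ({p : ℝ × ℝ | p.2 ≤ p.1}.indicator fun p => κ p.2) (s, u) ∂μ) ∂μ
      = ∫ u in (0:ℝ)..b, κ u * (b - u) := by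
    rw [intervalIntegral.integral_of_le hb.le, hμ]
    refine setIntegral_congr_fun measurableSet_Ioc fun u hu => ?_
    have h1 : (fun s => ({p : ℝ × ℝ | p.2 ≤ p.1}.indicator fun p => κ p.2) (s, u))
        = (Set.Ici u).indicator (fun _ => κ u) := by
      ext s; simp [Set.indicator_apply]
    rw [h1, MeasureTheory.integral_indicator measurableSet_Ici, setIntegral_const,
      measureReal_restrict_apply measurableSet_Ici]
    have hset : Set.Ici u ∩ Set.Ioc 0 b = Set.Icc u b := by
      ext v; simp only [Set.mem_inter_iff, Set.mem_Ici, Set.mem_Ioc, Set.mem_Icc]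
      constructor
      · rintro ⟨ha, _, hc⟩; exact ⟨ha, hc⟩
      · rintro ⟨ha, hc⟩; exact ⟨ha, hu.1.trans_le ha, hc⟩
    rw [hset, Real.volume_real_Icc, max_eq_left (by linarith [hu.2]), smul_eq_mul]
    ring
  rw [hL, hR] at swap
  exact swap

set_option maxHeartbeats 1000000 in
theorem stmt5 {X Y : Type*} [NormedAddCommGroup X] [NormedSpace ℝ X] [CompleteSpace X]
    [NormedAddCommGroup Y] [NormedSpace ℝ Y] [CompleteSpace Y]
    (G : X → Y) (G' : X → (X →L[ℝ] Y)) (xs : X) (δ : ℝ) (hδ : 0 < δ)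
    (hG : G xs = 0)
    (hdiff : ∀ x ∈ Metric.ball xs δ, HasFDerivAt G (G' x) x)
    (hcont : ContinuousOn G' (Metric.ball xs δ))
    (A : Y →L[ℝ] X)
    (hA1 : A.comp (G' xs) = ContinuousLinearMap.id ℝ X)
    (hA2 : (G' xs).comp A = ContinuousLinearMap.id ℝ Y)
    (κ₀ : ℝ → ℝ) (hκ₀pos : ∀ u, 0 < u → 0 < κ₀ u)
    (hκ₀int : IntegrableOn κ₀ (Set.Ioc 0 (2 * δ)))
    (hκ₀mono : MonotoneOn κ₀ (Set.Ici 0))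
    (hcenter : ∀ x ∈ Metric.ball xs δ, ∀ τ ∈ Set.Icc (0:ℝ) 1,
      ‖A.comp (G' (xs + τ • (x - xs)) - G' xs)‖ ≤
        ∫ u in (0:ℝ)..(2 * τ * ‖x - xs‖), κ₀ u)
    (hsmall : (1 / (2 * δ)) * ∫ u in (0:ℝ)..(2 * δ), κ₀ u * (2 * δ - u) < 1) :
    ∀ y ∈ Metric.ball xs δ, G y = 0 → y = xs := by
  intro y hy hGy
  by_contra hne
  set r := ‖y - xs‖ with hrdef
  have hr : 0 < r := norm_pos_iff.mpr (sub_ne_zero.mpr hne)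
  have hrδ : r < δ := by rwa [Metric.mem_ball, dist_eq_norm] at hy
  set p : ℝ → X := fun t => xs + t • (y - xs) with hp
  have hmem : ∀ t ∈ Set.Icc (0:ℝ) 1, p t ∈ Metric.ball xs δ := by
    intro t ht
    simp only [hp, Metric.mem_ball, dist_eq_norm, add_sub_cancel_left]
    rw [norm_smul, Real.norm_eq_abs, abs_of_nonneg ht.1]
    calc t * r ≤ 1 * r := by nlinarith [ht.2]
    _ < δ := by simpa using hrδ
  -- continuity of the derivative along the path
  have hpcont : Continuous p := continuous_const.add (continuous_id.smul continuous_const)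
  have hContG' : ContinuousOn (fun t => G' (p t)) (Set.Icc (0:ℝ) 1) :=
    hcont.comp hpcont.continuousOn (fun t ht => hmem t ht)
  have hint1 : IntervalIntegrable (fun t => A ((G' (p t)) (y - xs))) volume 0 1 := by
    apply ContinuousOn.intervalIntegrable
    rw [Set.uIcc_of_le zero_le_one]
    exact A.continuous.comp_continuousOn (hContG'.clm_apply continuousOn_const)
  -- fundamental theorem of calculus along the path
  have key : (∫ t in (0:ℝ)..1, A ((G' (p t)) (y - xs))) = 0 := by
    have hderiv : ∀ t ∈ Set.uIcc (0:ℝ) 1,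
        HasDerivAt (fun t => A (G (p t))) (A ((G' (p t)) (y - xs))) t := by
      intro t ht
      rw [Set.uIcc_of_le zero_le_one] at ht
      have hpd : HasDerivAt p (y - xs) t := by
        simpa only [one_smul, id_eq, hp] using ((hasDerivAt_id t).smul_const (y - xs)).const_add xs
      have hGd : HasDerivAt (fun t => G (p t)) ((G' (p t)) (y - xs)) t :=
        (hdiff _ (hmem t ht)).comp_hasDerivAt t hpd
      exact (A.hasFDerivAt.comp_hasDerivAt t hGd)
    rw [intervalIntegral.integral_eq_sub_of_hasDerivAt hderiv hint1]
    simp [hp, hGy, hG]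
  -- rewrite y - xs as an integral
  have hid : ∀ t : ℝ, (A.comp (G' (p t) - G' xs)) (y - xs)
      = A ((G' (p t)) (y - xs)) - (y - xs) := by
    intro t
    have h0 : (A.comp (G' xs)) (y - xs) = y - xs := by rw [hA1]; rfl
    simp only [ContinuousLinearMap.comp_apply, ContinuousLinearMap.sub_apply, map_sub] at h0 ⊢
    rw [← h0]; abel
  have hint2 : IntervalIntegrable (fun t => (A.comp (G' (p t) - G' xs)) (y - xs)) volume 0 1 := by
    simp only [hid]
    exact hint1.sub intervalIntegrable_const
  have hval : (∫ t in (0:ℝ)..1, (A.comp (G' (p t) - G' xs)) (y - xs)) = -(y - xs) := by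
    simp only [hid]
    rw [intervalIntegral.integral_sub hint1 intervalIntegrable_const, key]
    simp
  -- primitive of κ₀
  set F : ℝ → ℝ := fun s => ∫ u in (0:ℝ)..s, κ₀ u with hF
  have hFcont : ContinuousOn F (Set.Icc 0 (2 * δ)) := by
    have h1 : IntegrableOn κ₀ (Set.Icc 0 (2 * δ)) :=
      (integrableOn_Icc_iff_integrableOn_Ioc).mpr hκ₀int
    have := intervalIntegral.continuousOn_primitive (f := κ₀) (a := 0) (b := 2 * δ) h1
    refine this.congr fun x hx => ?_
    show (∫ u in (0:ℝ)..x, κ₀ u) = _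
    rw [intervalIntegral.integral_of_le hx.1]
  have hbound_cont : ContinuousOn (fun t : ℝ => F (2 * δ * t) * r) (Set.Icc 0 1) := by
    apply ContinuousOn.mul _ continuousOn_const
    apply hFcont.comp ((continuous_const.mul continuous_id).continuousOn)
    intro t ht
    simp only [id_eq, Set.mem_Icc, Pi.mul_apply]
    constructor
    · nlinarith [ht.1, hδ]
    · nlinarith [ht.2, hδ]
  have hbound_int : IntervalIntegrable (fun t : ℝ => F (2 * δ * t) * r) volume 0 1 := by
    apply ContinuousOn.intervalIntegrable
    rwa [Set.uIcc_of_le zero_le_one]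
  -- pointwise bound
  have hptwise : ∀ t ∈ Set.Ioc (0:ℝ) 1,
      ‖(A.comp (G' (p t) - G' xs)) (y - xs)‖ ≤ F (2 * δ * t) * r := by
    intro t ht
    have ht' : t ∈ Set.Icc (0:ℝ) 1 := ⟨ht.1.le, ht.2⟩
    calc ‖(A.comp (G' (p t) - G' xs)) (y - xs)‖
        ≤ ‖A.comp (G' (p t) - G' xs)‖ * r := (A.comp (G' (p t) - G' xs)).le_opNorm _
      _ ≤ (∫ u in (0:ℝ)..(2 * t * r), κ₀ u) * r := by
          apply mul_le_mul_of_nonneg_right _ hr.le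
          exact hcenter y hy t ht'
      _ ≤ F (2 * δ * t) * r := by
          apply mul_le_mul_of_nonneg_right _ hr.le
          rw [hF]
          apply intervalIntegral.integral_mono_interval le_rfl
            (by nlinarith [ht.1, hr]) (by nlinarith [ht.1, ht.2, hrδ, hδ])
          · refine (ae_restrict_iff' measurableSet_Ioc).mpr
              (Filter.Eventually.of_forall fun u hu => (hκ₀pos u hu.1).le)
          · rw [intervalIntegrable_iff_integrableOn_Ioc_of_le (by nlinarith [ht.1, hδ])]
            exact hκ₀int.mono_set (Set.Ioc_subset_Ioc le_rfl (by nlinarith [ht.2, hδ]))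
  -- main estimate
  have hmain : r ≤ |∫ t in (0:ℝ)..1, F (2 * δ * t) * r| := by
    calc r = ‖-(y - xs)‖ := by rw [norm_neg]
    _ = ‖∫ t in (0:ℝ)..1, (A.comp (G' (p t) - G' xs)) (y - xs)‖ := by rw [hval]
    _ ≤ |∫ t in (0:ℝ)..1, F (2 * δ * t) * r| := by
        apply intervalIntegral.norm_integral_le_abs_of_norm_le _ hbound_int
        rw [Set.uIoc_of_le zero_le_one]
        exact (ae_restrict_iff' measurableSet_Ioc).mpr
          (Filter.Eventually.of_forall hptwise)
  -- compute the bound integral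
  have hcomp : (∫ t in (0:ℝ)..1, F (2 * δ * t) * r)
      = ((1 / (2 * δ)) * ∫ u in (0:ℝ)..(2 * δ), κ₀ u * (2 * δ - u)) * r := by
    rw [intervalIntegral.integral_mul_const]
    congr 1
    have := intervalIntegral.integral_comp_mul_left (a := (0:ℝ)) (b := 1) F
      (c := 2 * δ)
    rw [mul_zero, mul_one] at this
    rw [this (by positivity), fubini_aux (2 * δ) (by positivity) κ₀ hκ₀int]
    rw [smul_eq_mul, one_div]
  have hI : (0:ℝ) ≤ ∫ u in (0:ℝ)..(2 * δ), κ₀ u * (2 * δ - u) := by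
    rw [intervalIntegral.integral_of_le (by positivity)]
    apply setIntegral_nonneg measurableSet_Ioc
    intro u hu
    have := hκ₀pos u hu.1
    nlinarith [hu.2]
  have hc01 : 0 ≤ (1 / (2 * δ)) * ∫ u in (0:ℝ)..(2 * δ), κ₀ u * (2 * δ - u) := by
    apply mul_nonneg (by positivity) hI
  rw [hcomp, abs_of_nonneg (mul_nonneg hc01 hr.le)] at hmain
  nlinarith [hmain, hsmall, hr]
end

section
/- Under the hypotheses that G(x*) = 0, G'(x*)⁻¹ exists, [G'(x*)]⁻¹ G' satisfies the radius Lipschitz condition ‖[G'(x*)]⁻¹(G'(x) − G'(x* + τ(x − x*)))‖ ≤ ∫_{2τρ(x)}^{2ρ(x)} κ(u) du with κ nondecreasing, and the center Lipschitz condition with κ₀ ≤ κ, if x_t ∈ B(x*, δ) with ∫₀^{2δ} κ₀(u) du < 1, then the Newton iterate y_t = x_t − [G'(x_t)]⁻¹ G(x_t) satisfies ‖y_t − x*‖ ≤ (∫₀^{2ρ(x_t)} κ(u) u du) / (2(1 − ∫₀^{2ρ(x_t)} κ₀(u) du)), where ρ(x) = ‖x − x*‖. -/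
open MeasureTheory intervalIntegral Set

lemma stmt8_fubini {f : ℝ → ℝ} (hf : Monotone f) {R : ℝ} (hR : 0 < R) :
    (∫ τ in (0:ℝ)..1, ∫ u in (τ * R)..R, f u) = ∫ u in (0:ℝ)..R, f u * (u / R) := by
  set g : ℝ → ℝ := fun u => f (max (min u R) 0) with hg
  have hgmono : Monotone g := fun a b hab =>
    hf (max_le_max (min_le_min_right R hab) le_rfl)
  have hgf : ∀ u ∈ Icc (0:ℝ) R, g u = f u := by
    intro u hu
    simp [hg, min_eq_left hu.2, max_eq_left hu.1]
  have hC : ∀ u, |g u| ≤ max |f 0| |f R| := by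
    intro u
    have h1 : f 0 ≤ g u := hf (le_max_right _ _)
    have h2 : g u ≤ f R := hf (max_le (min_le_right _ _) hR.le)
    have h3 := le_abs_self (f R)
    have h4 := neg_abs_le (f 0)
    have h5 := le_max_left |f 0| |f R|
    have h6 := le_max_right |f 0| |f R|
    rw [abs_le]
    constructor <;> linarith
  set μ := volume.restrict (Ioc (0:ℝ) 1) with hμ
  set ν := volume.restrict (Ioc (0:ℝ) R) with hν
  haveI : IsFiniteMeasure μ := ⟨by rw [hμ, Measure.restrict_apply_univ]; exact measure_Ioc_lt_top⟩
  haveI : IsFiniteMeasure ν := ⟨by rw [hν, Measure.restrict_apply_univ]; exact measure_Ioc_lt_top⟩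
  set F : ℝ × ℝ → ℝ := fun p => ({q : ℝ × ℝ | q.1 * R < q.2}.indicator (fun q => g q.2)) p with hF
  have hS : MeasurableSet {q : ℝ × ℝ | q.1 * R < q.2} :=
    measurableSet_lt (measurable_fst.mul_const R) measurable_snd
  have hFmeas : Measurable F :=
    ((hgmono.measurable).comp measurable_snd).indicator hS
  have hFint : Integrable F (μ.prod ν) := by
    refine Integrable.mono' (integrable_const (max |f 0| |f R|))
      hFmeas.aestronglyMeasurable (ae_of_all _ fun p => ?_)
    calc ‖F p‖ ≤ ‖g p.2‖ := norm_indicator_le_norm_self _ _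
      _ ≤ _ := hC p.2
  have key : (∫ τ, (∫ u, F (τ, u) ∂ν) ∂μ) = ∫ u, (∫ τ, F (τ, u) ∂μ) ∂ν :=
    integral_integral_swap hFint
  rw [integral_of_le zero_le_one, integral_of_le hR.le]
  calc ∫ τ in Ioc (0:ℝ) 1, (∫ u in (τ * R)..R, f u)
      = ∫ τ, (∫ u, F (τ, u) ∂ν) ∂μ := by
        refine setIntegral_congr_fun measurableSet_Ioc fun τ hτ => ?_
        have hτR0 : 0 ≤ τ * R := mul_nonneg hτ.1.le hR.le
        have hτRR : τ * R ≤ R := by nlinarith [hτ.2]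
        rw [integral_of_le hτRR]
        have e1 : ∫ u in Ioc (τ * R) R, f u = ∫ u in Ioc (τ * R) R, g u :=
          setIntegral_congr_fun measurableSet_Ioc fun u hu =>
            (hgf u ⟨hτR0.trans hu.1.le, hu.2⟩).symm
        have e2 : ∀ u : ℝ, F (τ, u) = (Ioi (τ * R)).indicator g u := by
          intro u
          simp [hF, Set.indicator_apply, Set.mem_Ioi, Set.mem_setOf_eq]
        rw [e1]
        have e2' : (∫ u, F (τ, u) ∂ν) = ∫ u in Ioc (0:ℝ) R, (Ioi (τ * R)).indicator g u :=
          setIntegral_congr_fun measurableSet_Ioc fun u _ => e2 u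
        rw [e2', setIntegral_indicator measurableSet_Ioi]
        have hset : Ioc (0:ℝ) R ∩ Ioi (τ * R) = Ioc (τ * R) R := by
          ext u
          simp only [Set.mem_inter_iff, Set.mem_Ioc, Set.mem_Ioi]
          constructor
          · rintro ⟨⟨h1, h2⟩, h3⟩; exact ⟨h3, h2⟩
          · rintro ⟨h1, h2⟩; exact ⟨⟨lt_of_le_of_lt hτR0 h1, h2⟩, h1⟩
        rw [hset]
    _ = ∫ u, (∫ τ, F (τ, u) ∂μ) ∂ν := key
    _ = ∫ u in Ioc (0:ℝ) R, f u * (u / R) := by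
        refine setIntegral_congr_fun measurableSet_Ioc fun u hu => ?_
        have hdiv : 0 < u / R := div_pos hu.1 hR
        have hdiv1 : u / R ≤ 1 := (div_le_one hR).2 hu.2
        have e3 : ∀ τ : ℝ, F (τ, u) = (Iio (u / R)).indicator (fun _ => g u) τ := by
          intro τ
          have hiff : τ * R < u ↔ τ < u / R := (lt_div_iff₀ hR).symm
          simp only [hF, Set.indicator_apply, Set.mem_setOf_eq, Set.mem_Iio, hiff]
        have e3' : (∫ τ, F (τ, u) ∂μ) = ∫ τ in Ioc (0:ℝ) 1, (Iio (u / R)).indicator (fun _ => g u) τ :=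
          setIntegral_congr_fun measurableSet_Ioc fun τ _ => e3 τ
        rw [e3', setIntegral_indicator measurableSet_Iio]
        have e4 : Ioc (0:ℝ) 1 ∩ Iio (u / R) = Ioo 0 (u / R) := by
          ext τ
          simp only [Set.mem_inter_iff, Set.mem_Ioc, Set.mem_Ioo, Set.mem_Iio]
          constructor
          · rintro ⟨⟨h1, _⟩, h3⟩; exact ⟨h1, h3⟩
          · rintro ⟨h1, h2⟩; exact ⟨⟨h1, (h2.le.trans hdiv1)⟩, h2⟩
        rw [e4, setIntegral_const, measureReal_def, Real.volume_Ioo, sub_zero,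
          ENNReal.toReal_ofReal hdiv.le, smul_eq_mul, hgf u ⟨hu.1.le, hu.2⟩, mul_comm]

theorem stmt8 {X Y : Type*} [NormedAddCommGroup X] [NormedSpace ℝ X] [CompleteSpace X]
    [NormedAddCommGroup Y] [NormedSpace ℝ Y] [CompleteSpace Y]
    (G : X → Y) (G' : X → (X →L[ℝ] Y)) (xs : X) (δ : ℝ) (hδ : 0 < δ)
    (hG : G xs = 0)
    (hdiff : ∀ x ∈ Metric.ball xs δ, HasFDerivAt G (G' x) x)
    (hcont : ContinuousOn G' (Metric.ball xs δ))
    (A : Y →L[ℝ] X)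
    (hA1 : A.comp (G' xs) = ContinuousLinearMap.id ℝ X)
    (hA2 : (G' xs).comp A = ContinuousLinearMap.id ℝ Y)
    (κ κ₀ : ℝ → ℝ)
    (hκpos : ∀ u, 0 < u → 0 < κ u) (hκ₀pos : ∀ u, 0 < u → 0 < κ₀ u)
    (hκmono : MonotoneOn κ (Set.Ici 0))
    (hle : ∀ u, 0 < u → κ₀ u ≤ κ u)
    (hκint : IntegrableOn κ (Set.Ioc 0 (2 * δ)))
    (hκ₀int : IntegrableOn κ₀ (Set.Ioc 0 (2 * δ)))
    (hradius : ∀ x ∈ Metric.ball xs δ, ∀ τ ∈ Set.Icc (0:ℝ) 1,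
      ‖A.comp (G' x - G' (xs + τ • (x - xs)))‖ ≤
        ∫ u in (2 * τ * ‖x - xs‖)..(2 * ‖x - xs‖), κ u)
    (hcenter : ∀ x ∈ Metric.ball xs δ,
      ‖A.comp (G' x - G' xs)‖ ≤ ∫ u in (0:ℝ)..(2 * ‖x - xs‖), κ₀ u)
    (hsmall : (∫ u in (0:ℝ)..(2 * δ), κ₀ u) < 1)
    (xt : X) (hxt : xt ∈ Metric.ball xs δ)
    (B : Y →L[ℝ] X)
    (hB1 : B.comp (G' xt) = ContinuousLinearMap.id ℝ X)
    (hB2 : (G' xt).comp B = ContinuousLinearMap.id ℝ Y) :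
    ‖(xt - B (G xt)) - xs‖ ≤
      (∫ u in (0:ℝ)..(2 * ‖xt - xs‖), κ u * u) /
        (2 * (1 - ∫ u in (0:ℝ)..(2 * ‖xt - xs‖), κ₀ u)) := by
  by_cases hz : xt = xs
  · subst hz
    simp [hG]
  -- notation
  have hρpos : 0 < ‖xt - xs‖ := norm_pos_iff.2 (sub_ne_zero.2 hz)
  have hρδ : ‖xt - xs‖ < δ := by rw [← mem_ball_iff_norm]; exact hxt
  set v := xt - xs with hv
  set ρ := ‖v‖ with hρdef
  -- monotone modification of κ
  set κ' : ℝ → ℝ := fun u => κ (max (min u (2 * δ)) 0) with hκ'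
  have hκ'mono : Monotone κ' := by
    intro a b hab
    exact hκmono (Set.mem_Ici.2 (le_max_right _ _)) (Set.mem_Ici.2 (le_max_right _ _))
      (max_le_max (min_le_min_right _ hab) le_rfl)
  have hκ'eq : ∀ u, 0 < u → u ≤ 2 * δ → κ' u = κ u := by
    intro u h1 h2
    rw [hκ']
    simp only [min_eq_left h2, max_eq_left h1.le]
  have hκ'pos : ∀ u, 0 < u → 0 < κ' u := by
    intro u h1
    rw [hκ']
    exact hκpos _ (lt_max_iff.2 (Or.inl (lt_min h1 (by linarith))))
  -- conversion of interval integrals of κ to κ'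
  have hconv : ∀ a b : ℝ, 0 ≤ a → b ≤ 2 * δ → a ≤ b →
      (∫ u in a..b, κ u) = ∫ u in a..b, κ' u := by
    intro a b ha hb hab
    rw [integral_of_le hab, integral_of_le hab]
    refine setIntegral_congr_fun measurableSet_Ioc fun u hu => ?_
    exact (hκ'eq u (lt_of_le_of_lt ha hu.1) (hu.2.trans hb)).symm
  have h2ρ2δ : 2 * ρ ≤ 2 * δ := by
    have := hρδ; rw [hρdef, hv]; linarith
  -- the center integral bound
  set c := ∫ u in (0:ℝ)..(2 * ρ), κ₀ u with hc
  have hκ₀II : IntervalIntegrable κ₀ volume 0 (2 * δ) :=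
    (intervalIntegrable_iff_integrableOn_Ioc_of_le (by linarith)).2 hκ₀int
  have hc0 : 0 ≤ c := by
    rw [hc, integral_of_le (by positivity)]
    exact setIntegral_nonneg measurableSet_Ioc fun u hu => (hκ₀pos u hu.1).le
  have hc1 : c < 1 := by
    refine lt_of_le_of_lt ?_ hsmall
    rw [hc]
    refine integral_mono_interval le_rfl (by positivity) h2ρ2δ ?_ hκ₀II
    exact (ae_restrict_iff' measurableSet_Ioc).2 (ae_of_all _ fun u hu => (hκ₀pos u hu.1).le)
  have h1c : 0 < 1 - c := by linarith
  -- the operator T = B ∘ G'(xs) and its norm bound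
  set T := B.comp (G' xs) with hT
  set K := ‖T‖ with hK
  have hK0 : 0 ≤ K := norm_nonneg _
  set E := A.comp (G' xt - G' xs) with hE
  have hEnorm : ‖E‖ ≤ c := by
    have := hcenter xt hxt
    rw [hc]
    exact this
  have hTA : T.comp A = B := by
    rw [hT, ContinuousLinearMap.comp_assoc, hA2, ContinuousLinearMap.comp_id]
  have hAGE : A.comp (G' xt) = ContinuousLinearMap.id ℝ X + E := by
    rw [hE, ContinuousLinearMap.comp_sub, hA1]
    abel
  have hTid : T + T.comp E = ContinuousLinearMap.id ℝ X := by
    have h1 : T.comp (A.comp (G' xt)) = ContinuousLinearMap.id ℝ X := by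
      rw [← ContinuousLinearMap.comp_assoc, hTA, hB1]
    rw [hAGE, ContinuousLinearMap.comp_add, ContinuousLinearMap.comp_id] at h1
    exact h1
  have hKbound : K * (1 - c) ≤ 1 := by
    have h1 : T = ContinuousLinearMap.id ℝ X - T.comp E := by
      rw [← hTid]; abel
    have h2 : K ≤ 1 + K * c := by
      calc K = ‖ContinuousLinearMap.id ℝ X - T.comp E‖ := by rw [hK, ← h1]
        _ ≤ ‖ContinuousLinearMap.id ℝ X‖ + ‖T.comp E‖ := norm_sub_le _ _
        _ ≤ 1 + ‖T‖ * ‖E‖ := add_le_add ContinuousLinearMap.norm_id_le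
            (ContinuousLinearMap.opNorm_comp_le _ _)
        _ ≤ 1 + K * c := by
            have := mul_le_mul_of_nonneg_left hEnorm (norm_nonneg T)
            rw [hK]; linarith
    have hexp : K * (1 - c) = K - K * c := by ring
    linarith
  -- the path and FTC
  have hmem : ∀ τ ∈ Icc (0:ℝ) 1, xs + τ • v ∈ Metric.ball xs δ := by
    intro τ hτ
    rw [mem_ball_iff_norm, add_sub_cancel_left, norm_smul, Real.norm_eq_abs,
      abs_of_nonneg hτ.1]
    have : τ * ρ ≤ 1 * ρ := mul_le_mul_of_nonneg_right hτ.2 hρpos.le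
    have hρδ' : ρ < δ := hρδ
    linarith
  have hpath : ∀ τ : ℝ, HasDerivAt (fun t : ℝ => xs + t • v) v τ := by
    intro τ
    have h1 : HasDerivAt (fun t : ℝ => t • v) ((1:ℝ) • v) τ :=
      (hasDerivAt_id τ).smul_const v
    rw [one_smul] at h1
    exact h1.const_add xs
  have hderiv : ∀ τ ∈ uIcc (0:ℝ) 1,
      HasDerivAt (fun t : ℝ => G (xs + t • v)) ((G' (xs + τ • v)) v) τ := by
    intro τ hτ
    rw [uIcc_of_le zero_le_one] at hτ
    exact (hdiff _ (hmem τ hτ)).comp_hasDerivAt τ (hpath τ)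
  have hφcont : ContinuousOn (fun τ : ℝ => (G' (xs + τ • v)) v) (Icc 0 1) := by
    have hpc : Continuous fun τ : ℝ => xs + τ • v := continuous_const.add (continuous_id.smul continuous_const)
    exact (hcont.comp hpc.continuousOn fun τ hτ => hmem τ hτ).clm_apply continuousOn_const
  have hφint : IntervalIntegrable (fun τ : ℝ => (G' (xs + τ • v)) v) volume 0 1 := by
    apply ContinuousOn.intervalIntegrable
    rw [uIcc_of_le zero_le_one]
    exact hφcont
  have hFTC : (∫ τ in (0:ℝ)..1, (G' (xs + τ • v)) v) = G xt := by
    rw [integral_eq_sub_of_hasDerivAt hderiv hφint]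
    rw [one_smul, zero_smul, add_zero, hG, sub_zero, hv, add_sub_cancel]
  have hBv : B ((G' xt) v) = v := by
    have := ContinuousLinearMap.ext_iff.1 hB1 v
    simpa using this
  have hBφint : IntervalIntegrable (fun τ : ℝ => B ((G' (xs + τ • v)) v)) volume 0 1 := by
    apply ContinuousOn.intervalIntegrable
    rw [uIcc_of_le zero_le_one]
    exact B.continuous.comp_continuousOn hφcont
  have hkey : xt - B (G xt) - xs = ∫ τ in (0:ℝ)..1, B ((G' xt - G' (xs + τ • v)) v) := by
    have e1 : ∀ τ : ℝ, B ((G' xt - G' (xs + τ • v)) v)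
        = v - B ((G' (xs + τ • v)) v) := by
      intro τ
      rw [ContinuousLinearMap.sub_apply, map_sub, hBv]
    simp only [e1]
    rw [intervalIntegral.integral_sub intervalIntegrable_const hBφint,
      intervalIntegral.integral_const, B.intervalIntegral_comp_comm hφint, hFTC]
    rw [sub_zero, one_smul, hv]
    abel
  -- pointwise norm bound
  set ψ : ℝ → ℝ := fun τ => ∫ u in (2 * τ * ρ)..(2 * ρ), κ' u with hψ
  have hκ'II : ∀ a b : ℝ, IntervalIntegrable κ' volume a b := fun a b =>
    hκ'mono.intervalIntegrable
  have hψnonneg : ∀ τ, 0 ≤ τ → τ ≤ 1 → 0 ≤ ψ τ := by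
    intro τ h0 h1
    simp only [hψ]
    have hle' : 2 * τ * ρ ≤ 2 * ρ := by
      have := mul_le_mul_of_nonneg_right h1 hρpos.le
      have e : 2 * τ * ρ = 2 * (τ * ρ) := by ring
      linarith
    rw [integral_of_le hle']
    have h00 : (0:ℝ) ≤ 2 * τ * ρ := mul_nonneg (mul_nonneg (by norm_num) h0) hρpos.le
    exact setIntegral_nonneg measurableSet_Ioc fun u hu =>
      (hκ'pos u (lt_of_le_of_lt h00 hu.1)).le
  have hψanti : AntitoneOn ψ (Icc 0 1) := by
    intro τ₁ hτ₁ τ₂ hτ₂ h12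
    simp only [hψ]
    have e1 : 2 * τ₁ * ρ ≤ 2 * τ₂ * ρ := by
      have := mul_le_mul_of_nonneg_right h12 hρpos.le
      have e : 2 * τ₁ * ρ = 2 * (τ₁ * ρ) := by ring
      have e' : 2 * τ₂ * ρ = 2 * (τ₂ * ρ) := by ring
      linarith
    have e2 : 2 * τ₂ * ρ ≤ 2 * ρ := by
      have := mul_le_mul_of_nonneg_right hτ₂.2 hρpos.le
      have e : 2 * τ₂ * ρ = 2 * (τ₂ * ρ) := by ring
      linarith
    refine integral_mono_interval e1 e2 le_rfl ?_ (hκ'II _ _)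
    refine (ae_restrict_iff' measurableSet_Ioc).2 (ae_of_all _ fun u hu => ?_)
    have h00 : (0:ℝ) ≤ 2 * τ₁ * ρ := mul_nonneg (mul_nonneg (by norm_num) hτ₁.1) hρpos.le
    exact (hκ'pos u (lt_of_le_of_lt h00 hu.1)).le
  have hbound : ∀ τ ∈ Icc (0:ℝ) 1,
      ‖B ((G' xt - G' (xs + τ • v)) v)‖ ≤ K * ψ τ * ρ := by
    intro τ hτ
    set M := G' xt - G' (xs + τ • v) with hM
    have e2 : B ((M) v) = (T.comp (A.comp M)) v := by
      rw [← hTA]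
      simp [ContinuousLinearMap.comp_apply]
    have hAM : ‖A.comp M‖ ≤ ψ τ := by
      have hr := hradius xt hxt τ hτ
      rw [hM, hv]
      rw [← hv, ← hρdef] at hr
      refine hr.trans (le_of_eq ?_)
      simp only [hψ]
      refine hconv _ _ (mul_nonneg (mul_nonneg (by norm_num) hτ.1) hρpos.le) h2ρ2δ ?_
      have := mul_le_mul_of_nonneg_right hτ.2 hρpos.le
      have e : 2 * τ * ρ = 2 * (τ * ρ) := by ring
      linarith
    calc ‖B (M v)‖ = ‖(T.comp (A.comp M)) v‖ := by rw [e2]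
      _ ≤ ‖T.comp (A.comp M)‖ * ‖v‖ := ContinuousLinearMap.le_opNorm _ _
      _ ≤ (‖T‖ * ‖A.comp M‖) * ρ := by
          rw [← hρdef]
          exact mul_le_mul_of_nonneg_right (ContinuousLinearMap.opNorm_comp_le _ _)
            (norm_nonneg _)
      _ ≤ K * ψ τ * ρ := by
          refine mul_le_mul_of_nonneg_right ?_ hρpos.le
          exact mul_le_mul_of_nonneg_left hAM hK0
  -- integrate the bound
  have hbII : IntervalIntegrable (fun τ => K * ψ τ * ρ) volume 0 1 := by
    apply AntitoneOn.intervalIntegrable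
    rw [uIcc_of_le zero_le_one]
    intro τ₁ hτ₁ τ₂ hτ₂ h12
    have h := hψanti hτ₁ hτ₂ h12
    refine mul_le_mul_of_nonneg_right ?_ hρpos.le
    exact mul_le_mul_of_nonneg_left h hK0
  have hnorm : ‖xt - B (G xt) - xs‖ ≤ |∫ τ in (0:ℝ)..1, K * ψ τ * ρ| := by
    rw [hkey]
    refine intervalIntegral.norm_integral_le_abs_of_norm_le ?_ hbII
    rw [uIoc_of_le zero_le_one]
    refine (ae_restrict_iff' measurableSet_Ioc).2 (ae_of_all _ fun τ hτ => ?_)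
    exact hbound τ ⟨hτ.1.le, hτ.2⟩
  -- compute the integral of the bound via Fubini
  have hfub : (∫ τ in (0:ℝ)..1, ψ τ) = ∫ u in (0:ℝ)..(2 * ρ), κ' u * (u / (2 * ρ)) := by
    have h2ρpos : 0 < 2 * ρ := by positivity
    have := stmt8_fubini hκ'mono h2ρpos
    rw [← this]
    refine intervalIntegral.integral_congr fun τ _ => ?_
    simp only [hψ]
    congr 1
    ring
  have hIval : (∫ u in (0:ℝ)..(2 * ρ), κ' u * (u / (2 * ρ)))
      = (2 * ρ)⁻¹ * ∫ u in (0:ℝ)..(2 * ρ), κ' u * u := by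
    rw [← intervalIntegral.integral_const_mul]
    refine intervalIntegral.integral_congr fun u _ => ?_
    field_simp
  set I := ∫ u in (0:ℝ)..(2 * ρ), κ u * u with hI
  have hIκ' : (∫ u in (0:ℝ)..(2 * ρ), κ' u * u) = I := by
    rw [hI, integral_of_le (by positivity), integral_of_le (by positivity)]
    refine setIntegral_congr_fun measurableSet_Ioc fun u hu => ?_
    rw [hκ'eq u hu.1 (hu.2.trans h2ρ2δ)]
  have hI0 : 0 ≤ I := by
    rw [hI, integral_of_le (by positivity)]
    exact setIntegral_nonneg measurableSet_Ioc fun u hu =>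
      mul_nonneg (hκpos u hu.1).le (hu.1.le.trans (le_refl u))
  have hbval : (∫ τ in (0:ℝ)..1, K * ψ τ * ρ) = K * ρ * ((2 * ρ)⁻¹ * I) := by
    have e3 : ∀ τ : ℝ, K * ψ τ * ρ = (K * ρ) * ψ τ := fun τ => by ring
    simp only [e3]
    rw [intervalIntegral.integral_const_mul, hfub, hIval, hIκ']
  have hbval2 : (∫ τ in (0:ℝ)..1, K * ψ τ * ρ) = K / 2 * I := by
    rw [hbval]
    field_simp
  have hfinal : K / 2 * I ≤ I / (2 * (1 - c)) := by
    rw [le_div_iff₀ (by positivity)]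
    have h := mul_le_mul_of_nonneg_left hKbound hI0
    calc K / 2 * I * (2 * (1 - c)) = I * (K * (1 - c)) := by ring
      _ ≤ I * 1 := h
      _ = I := mul_one I
  have habs : |∫ τ in (0:ℝ)..1, K * ψ τ * ρ| = K / 2 * I := by
    rw [hbval2, abs_of_nonneg (by positivity)]
  -- conclude
  calc ‖xt - B (G xt) - xs‖ ≤ |∫ τ in (0:ℝ)..1, K * ψ τ * ρ| := hnorm
    _ = K / 2 * I := habs
    _ ≤ I / (2 * (1 - c)) := hfinal
    _ = _ := by rw [hI, hc]
end

section
/- There is no positive integrable function L on (0, r] (for any r > 0) such that |g(x) − g(y^τ)| ≤ ∫_{τ(|x|+|y|)}^{|x|+|y|} L(u) du for all x, y ∈ (−r, r) and 0 ≤ τ ≤ 1, where g(x) = 1 + 2x sin(π/x) for x ≠ 0 and g(0) = 1. In fact any such L would satisfy ∫₀^{2r} L(u) du ≥ Σ_{k≥n₀} 4/(2k+1) = ∞ for some n₀. -/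
open MeasureTheory intervalIntegral

theorem stmt17 (g : ℝ → ℝ)
    (hg : ∀ x : ℝ, g x = if x = 0 then 1 else 1 + 2 * x * Real.sin (Real.pi / x)) :
    ∀ r : ℝ, 0 < r → ∀ L : ℝ → ℝ,
      (∀ u ∈ Set.Ioc (0:ℝ) (2 * r), 0 < L u) →
      IntegrableOn L (Set.Ioc (0:ℝ) (2 * r)) →
      ¬ (∀ x ∈ Set.Ioo (-r) r, ∀ y ∈ Set.Ioo (-r) r, ∀ τ ∈ Set.Icc (0:ℝ) 1,
          |g x - g (τ * y)| ≤ ∫ u in (τ * (|x| + |y|))..(|x| + |y|), L u) := by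
  intro r hr L hLpos hLint H
  obtain ⟨m, hm⟩ := exists_nat_gt (1 / r)
  set n0 := max m 1 with hn0
  -- the key sets
  set S : ℕ → Set ℝ := fun k => Set.Ioc (4/(2*(k:ℝ)+1)) (2/(k:ℝ)) with hS
  -- basic facts for k ≥ n0
  have hbase : ∀ k : ℕ, n0 ≤ k → 1 ≤ (k:ℝ) ∧ 1/r < (k:ℝ) := by
    intro k hk
    constructor
    · exact_mod_cast le_trans (le_max_right m 1) hk
    · have : m ≤ k := le_trans (le_max_left m 1) hk
      calc (1/r : ℝ) < m := hm
        _ ≤ k := by exact_mod_cast this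
  -- step 1: per-k lower bound
  have key : ∀ k : ℕ, n0 ≤ k → 4/(2*(k:ℝ)+1) ≤ ∫ x in S k, L x := by
    intro k hk
    obtain ⟨hk1, hkr⟩ := hbase k hk
    have hk0 : (0:ℝ) < k := by linarith
    have hxr : 1/(k:ℝ) < r := by
      rw [div_lt_iff₀ hk0]
      rw [div_lt_iff₀ hr] at hkr
      nlinarith
    have hxpos : (0:ℝ) < 1/(k:ℝ) := by positivity
    have hx : (1/(k:ℝ)) ∈ Set.Ioo (-r) r := ⟨by linarith, hxr⟩
    have hden : (0:ℝ) < 2*(k:ℝ)+1 := by linarith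
    have hτ : (2*(k:ℝ)/(2*(k:ℝ)+1)) ∈ Set.Icc (0:ℝ) 1 := by
      constructor
      · positivity
      · rw [div_le_one hden]; linarith
    have hH := H (1/(k:ℝ)) hx (1/(k:ℝ)) hx _ hτ
    -- compute g (1/k)
    have hg1 : g (1/(k:ℝ)) = 1 := by
      rw [hg, if_neg (by positivity)]
      have : Real.pi / (1/(k:ℝ)) = (k:ℝ) * Real.pi := by field_simp
      rw [this, Real.sin_nat_mul_pi]; ring
    -- compute g (τ * y)
    have hτy : (2*(k:ℝ)/(2*(k:ℝ)+1)) * (1/(k:ℝ)) = 2/(2*(k:ℝ)+1) := by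
      field_simp
    have hg2 : g ((2*(k:ℝ)/(2*(k:ℝ)+1)) * (1/(k:ℝ))) = 1 + 4/(2*(k:ℝ)+1) * (-1)^k := by
      rw [hτy, hg, if_neg (by positivity)]
      have hpi : Real.pi / (2 / (2*(k:ℝ)+1)) = (k:ℝ) * Real.pi + Real.pi/2 := by
        field_simp
      rw [hpi, Real.sin_add, Real.sin_nat_mul_pi, Real.sin_pi_div_two, Real.cos_pi_div_two]
      have hc := Real.cos_nat_mul_pi_sub 0 k
      simp only [sub_zero, Real.cos_zero, mul_one] at hc
      rw [hc]; ring
    -- LHS value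
    have hlhs : |g (1/(k:ℝ)) - g ((2*(k:ℝ)/(2*(k:ℝ)+1)) * (1/(k:ℝ)))| = 4/(2*(k:ℝ)+1) := by
      rw [hg1, hg2]
      have : (1:ℝ) - (1 + 4/(2*(k:ℝ)+1) * (-1)^k) = -(4/(2*(k:ℝ)+1) * (-1)^k) := by ring
      rw [this, abs_neg, abs_mul, abs_pow, abs_neg, abs_one, one_pow, mul_one,
        abs_of_pos (by positivity)]
    -- RHS bounds
    have habs : |1/(k:ℝ)| + |1/(k:ℝ)| = 2/(k:ℝ) := by
      rw [abs_of_pos hxpos]; ring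
    have hlo : (2*(k:ℝ)/(2*(k:ℝ)+1)) * (|1/(k:ℝ)| + |1/(k:ℝ)|) = 4/(2*(k:ℝ)+1) := by
      rw [habs]; field_simp; ring
    rw [hlhs, hlo, habs] at hH
    have hle : 4/(2*(k:ℝ)+1) ≤ 2/(k:ℝ) := by
      rw [div_le_div_iff₀ hden hk0]; nlinarith
    rwa [intervalIntegral.integral_of_le hle] at hH
  -- step 2: S k ⊆ Ioc 0 (2r) and integrability, nonneg
  have hsub : ∀ k : ℕ, n0 ≤ k → S k ⊆ Set.Ioc (0:ℝ) (2*r) := by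
    intro k hk u hu
    obtain ⟨hk1, hkr⟩ := hbase k hk
    have hk0 : (0:ℝ) < k := by linarith
    have hden : (0:ℝ) < 2*(k:ℝ)+1 := by linarith
    refine ⟨lt_trans (by positivity) hu.1, le_trans hu.2 ?_⟩
    rw [div_le_iff₀ hk0]
    rw [div_lt_iff₀ hr] at hkr
    nlinarith
  have hint : ∀ k : ℕ, n0 ≤ k → IntegrableOn L (S k) := fun k hk =>
    hLint.mono_set (hsub k hk)
  have hnn : 0 ≤ᵐ[volume.restrict (Set.Ioc (0:ℝ) (2*r))] L := by
    filter_upwards [ae_restrict_mem measurableSet_Ioc] with u hu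
    exact (hLpos u hu).le
  -- step 3: sums
  set C := ∫ x in Set.Ioc (0:ℝ) (2*r), L x with hC
  have hsum : ∀ n : ℕ, ∑ k ∈ Finset.Ico n0 n, 4/(2*(k:ℝ)+1) ≤ C := by
    intro n
    have hdisj : (↑(Finset.Ico n0 n) : Set ℕ).Pairwise (Function.onFun Disjoint S) := by
      intro a ha b hb hab
      simp only [Finset.coe_Ico, Set.mem_Ico] at ha hb
      have key2 : ∀ c d : ℕ, n0 ≤ c → n0 ≤ d → c < d → Disjoint (S c) (S d) := by
        intro c d hc hd hcd
        obtain ⟨hc1, _⟩ := hbase c hc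
        obtain ⟨hd1, _⟩ := hbase d hd
        have hc0 : (0:ℝ) < c := by linarith
        have hd0 : (0:ℝ) < d := by linarith
        have hcd' : (c:ℝ) + 1 ≤ d := by exact_mod_cast hcd
        rw [Set.Ioc_disjoint_Ioc]
        apply le_max_of_le_left
        apply min_le_of_right_le
        rw [div_le_div_iff₀ hd0 (by linarith : (0:ℝ) < 2*(c:ℝ)+1)]
        nlinarith
      rcases lt_or_gt_of_ne hab with h | h
      · exact key2 a b ha.1 hb.1 h
      · exact (key2 b a hb.1 ha.1 h).symm
    have hmeas : ∀ k ∈ Finset.Ico n0 n, MeasurableSet (S k) := fun k _ => measurableSet_Ioc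
    have hints : ∀ k ∈ Finset.Ico n0 n, IntegrableOn L (S k) := by
      intro k hk
      exact hint k (Finset.mem_Ico.mp hk).1
    calc ∑ k ∈ Finset.Ico n0 n, 4/(2*(k:ℝ)+1)
        ≤ ∑ k ∈ Finset.Ico n0 n, ∫ x in S k, L x := by
          apply Finset.sum_le_sum
          intro k hk
          exact key k (Finset.mem_Ico.mp hk).1
      _ = ∫ x in ⋃ k ∈ Finset.Ico n0 n, S k, L x :=
          (integral_biUnion_finset _ hmeas hdisj hints).symm
      _ ≤ C := by
          apply setIntegral_mono_set hLint hnn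
          apply HasSubset.Subset.eventuallyLE
          apply Set.iUnion₂_subset
          intro k hk
          exact hsub k (Finset.mem_Ico.mp hk).1
  -- step 4: divergence
  have hdiv : Filter.Tendsto (fun n => ∑ i ∈ Finset.range n, (1 / (i + 1) : ℝ))
      Filter.atTop Filter.atTop := Real.tendsto_sum_range_one_div_nat_succ_atTop
  obtain ⟨n, hn⟩ := (Filter.tendsto_atTop.mp hdiv
    (C + ∑ i ∈ Finset.range n0, (1 / (i + 1) : ℝ) + 1)).exists
  have hsplit : ∑ k ∈ Finset.Ico n0 (max n n0), (1 / ((k:ℝ) + 1))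
      = ∑ i ∈ Finset.range (max n n0), (1 / (i + 1) : ℝ)
        - ∑ i ∈ Finset.range n0, (1 / (i + 1) : ℝ) := by
    rw [Finset.range_eq_Ico, Finset.range_eq_Ico,
      ← Finset.sum_Ico_consecutive _ (Nat.zero_le n0) (le_max_right n n0)]
    ring
  have hcmp : ∑ k ∈ Finset.Ico n0 (max n n0), (1 / ((k:ℝ) + 1))
      ≤ ∑ k ∈ Finset.Ico n0 (max n n0), 4/(2*(k:ℝ)+1) := by
    apply Finset.sum_le_sum
    intro k hk
    have hk0 : (0:ℝ) ≤ k := Nat.cast_nonneg k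
    rw [div_le_div_iff₀ (by linarith) (by linarith)]
    linarith
  have hmono : ∑ i ∈ Finset.range n, (1 / (i + 1) : ℝ)
      ≤ ∑ i ∈ Finset.range (max n n0), (1 / (i + 1) : ℝ) := by
    apply Finset.sum_le_sum_of_subset_of_nonneg
    · exact Finset.range_subset_range.mpr (le_max_left n n0)
    · intro i _ _; positivity
  have := hsum (max n n0)
  linarith
end
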